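/- Let 0 ≤ r ≤ r' be real numbers and let X be a finite quasimetric space. If M is an r-minimal model of X and M' is an r'-minimal model of M, then M' is an r'-minimal model of X. (In the notation of the paper: M_{r'}(M_r(X)) ≅ M_{r'}(X) whenever r ≤ r'.) In particular, any short maps that are r-homotopic are also r'-homotopic, and r-homotopy equivalent spaces are r'-homotopy equivalent. -/

import Mathlib

open scoped ENNReal

class QuasiMetric (X : Type*) where
  qdist : X → X → ℝ≥0∞
  qdist_triangle : ∀ x y z : X, qdist x z ≤ qdist x y + qdist y z
  qdist_eq_zero_iff : ∀ x y : X, qdist x y = 0 ↔ x = y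

open QuasiMetric

instance {X : Type*} [QuasiMetric X] (A : Set X) : QuasiMetric A where
  qdist a b := qdist a.1 b.1
  qdist_triangle a b c := qdist_triangle a.1 b.1 c.1
  qdist_eq_zero_iff a b := (qdist_eq_zero_iff a.1 b.1).trans Subtype.coe_inj

/-- A map of quasimetric spaces is short (1-Lipschitz). -/
def IsShort {X Y : Type*} [QuasiMetric X] [QuasiMetric Y] (f : X → Y) : Prop :=
  ∀ x x' : X, qdist (f x) (f x') ≤ qdist x x'

/-- The distance `d(f,g) = sup_x d(f x, g x)` on maps. -/
noncomputable def mapDist {X Y : Type*} [QuasiMetric X] [QuasiMetric Y] (f g : X → Y) : ℝ≥0∞ :=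
  ⨆ x : X, qdist (f x) (g x)

/-- Two short maps are `r`-homotopic if they are connected by a chain of short maps
in which each consecutive pair is at distance `≤ r` in one direction or the other. -/
def MapHomotopic {X Y : Type*} [QuasiMetric X] [QuasiMetric Y] (r : ℝ) (f g : X → Y) : Prop :=
  Relation.ReflTransGen
    (fun u v : X → Y => IsShort u ∧ IsShort v ∧
      (mapDist u v ≤ ENNReal.ofReal r ∨ mapDist v u ≤ ENNReal.ofReal r)) f g

/-- `A ⊆ X` is an `r`-deformation retract of `X`. -/
def IsDefRetract {X : Type*} [QuasiMetric X] (r : ℝ) (A : Set X) : Prop :=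
  ∃ ρ : X → A, IsShort ρ ∧ (∀ a : A, ρ (a : X) = a) ∧
    MapHomotopic r (fun x => (ρ x : X)) id

/-- A quasimetric space is `r`-minimal if it has no proper `r`-deformation retract. -/
def RMinimal (r : ℝ) (X : Type*) [QuasiMetric X] : Prop :=
  ∀ A : Set X, IsDefRetract r A → A = Set.univ

/-- A distance-preserving bijection. -/
def IsIsometry {X Y : Type*} [QuasiMetric X] [QuasiMetric Y] (f : X → Y) : Prop :=
  Function.Bijective f ∧ ∀ x x' : X, qdist (f x) (f x') = qdist x x'

/-- Two quasimetric spaces are `r`-homotopy equivalent. -/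
def RHomotopyEquivalent (r : ℝ) (X Y : Type*) [QuasiMetric X] [QuasiMetric Y] : Prop :=
  ∃ f : X → Y, ∃ g : Y → X, IsShort f ∧ IsShort g ∧
    MapHomotopic r (g ∘ f) id ∧ MapHomotopic r (f ∘ g) id

lemma isShort_comp {X Y Z : Type*} [QuasiMetric X] [QuasiMetric Y] [QuasiMetric Z]
    {f : X → Y} {g : Y → Z} (hg : IsShort g) (hf : IsShort f) : IsShort (g ∘ f) :=
  fun x x' => le_trans (hg _ _) (hf x x')

lemma mapHomotopic_mono {X Y : Type*} [QuasiMetric X] [QuasiMetric Y] {r r' : ℝ}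
    (h : r ≤ r') {f g : X → Y} (hfg : MapHomotopic r f g) : MapHomotopic r' f g := by
  refine Relation.ReflTransGen.mono ?_ f g hfg
  rintro u v ⟨hu, hv, hd | hd⟩
  · exact ⟨hu, hv, Or.inl (hd.trans (ENNReal.ofReal_le_ofReal h))⟩
  · exact ⟨hu, hv, Or.inr (hd.trans (ENNReal.ofReal_le_ofReal h))⟩

lemma mapDist_comp_le {X Y Z W : Type*} [QuasiMetric X] [QuasiMetric Y] [QuasiMetric Z]
    [QuasiMetric W] {u v : Y → Z} {h : Z → W} {k : X → Y} (hh : IsShort h) :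
    mapDist (h ∘ u ∘ k) (h ∘ v ∘ k) ≤ mapDist u v :=
  iSup_le fun x => le_trans (hh _ _) (le_iSup (fun y => qdist (u y) (v y)) (k x))

lemma mapHomotopic_comp {X Y Z W : Type*} [QuasiMetric X] [QuasiMetric Y] [QuasiMetric Z]
    [QuasiMetric W] {r : ℝ} {u v : Y → Z} {h : Z → W} {k : X → Y}
    (hh : IsShort h) (hk : IsShort k) (huv : MapHomotopic r u v) :
    MapHomotopic r (h ∘ u ∘ k) (h ∘ v ∘ k) := by
  induction huv with
  | refl => exact Relation.ReflTransGen.refl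
  | tail _ hstep ih =>
      refine ih.tail ?_
      obtain ⟨ha, hb, hd | hd⟩ := hstep
      · exact ⟨isShort_comp hh (isShort_comp ha hk), isShort_comp hh (isShort_comp hb hk),
          Or.inl ((mapDist_comp_le hh).trans hd)⟩
      · exact ⟨isShort_comp hh (isShort_comp ha hk), isShort_comp hh (isShort_comp hb hk),
          Or.inr ((mapDist_comp_le hh).trans hd)⟩

lemma rHomotopyEquivalent_trans {X Y Z : Type*} [QuasiMetric X] [QuasiMetric Y] [QuasiMetric Z]
    {r : ℝ} (h1 : RHomotopyEquivalent r X Y) (h2 : RHomotopyEquivalent r Y Z) :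
    RHomotopyEquivalent r X Z := by
  obtain ⟨f1, g1, hf1, hg1, hgf1, hfg1⟩ := h1
  obtain ⟨f2, g2, hf2, hg2, hgf2, hfg2⟩ := h2
  refine ⟨f2 ∘ f1, g1 ∘ g2, isShort_comp hf2 hf1, isShort_comp hg1 hg2, ?_, ?_⟩
  · have h := mapHomotopic_comp hg1 hf1 hgf2
    exact (h.trans hgf1 : _)
  · have h := mapHomotopic_comp hf2 hg2 hfg1
    exact (h.trans hfg2 : _)

theorem stmt_8 {X M M' Y Z V W : Type*} [QuasiMetric X] [QuasiMetric M] [QuasiMetric M']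
    [QuasiMetric Y] [QuasiMetric Z] [QuasiMetric V] [QuasiMetric W]
    [Finite X] [Finite M] [Finite M']
    (r r' : ℝ) (hr : 0 ≤ r) (hrr' : r ≤ r')
    (hM : RMinimal r M ∧ RHomotopyEquivalent r M X)
    (hM' : RMinimal r' M' ∧ RHomotopyEquivalent r' M' M) :
    (RMinimal r' M' ∧ RHomotopyEquivalent r' M' X) ∧
    (∀ f g : Y → Z, IsShort f → IsShort g → MapHomotopic r f g → MapHomotopic r' f g) ∧
    (RHomotopyEquivalent r V W → RHomotopyEquivalent r' V W) := by
  obtain ⟨hMmin, hMeq⟩ := hM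
  obtain ⟨hM'min, hM'eq⟩ := hM'
  refine ⟨⟨hM'min, rHomotopyEquivalent_trans hM'eq ?_⟩, ?_, ?_⟩
  · obtain ⟨f, g, hf, hg, h1, h2⟩ := hMeq
    exact ⟨f, g, hf, hg, mapHomotopic_mono hrr' h1, mapHomotopic_mono hrr' h2⟩
  · exact fun f g _ _ h => mapHomotopic_mono hrr' h
  · rintro ⟨f, g, hf, hg, h1, h2⟩
    exact ⟨f, g, hf, hg, mapHomotopic_mono hrr' h1, mapHomotopic_mono hrr' h2⟩
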